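/- For u in the Sobolev space W^{1,2}(ℝ²), the L³ norm of u satisfies ‖u‖₃ ≤ (π/2)^{1/6} ‖u‖_{1,2}, where ‖u‖_{1,2} = (‖u‖₂² + ‖∇u‖₂²)^{1/2}. -/

import Mathlib

open MeasureTheory Filter Topology Set ENNReal

set_option linter.unusedVariables false

lemma limit_nonpos {g : ℝ → ℝ} (hg : Integrable g) {c : ℝ}
    (hc : Tendsto g atBot (𝓝 c)) : c ≤ 0 := by
  by_contra h
  push_neg at h
  have hev : ∀ᶠ x in atBot, c / 2 < g x := hc.eventually_const_lt (by linarith)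
  obtain ⟨N, hN⟩ := eventually_atBot.1 hev
  have h1 : ∫⁻ x in Iic N, ENNReal.ofReal (c / 2) ≤ ∫⁻ x in Iic N, ENNReal.ofReal (g x) := by
    refine lintegral_mono_ae ?_
    filter_upwards [ae_restrict_mem measurableSet_Iic] with x hx
    exact ENNReal.ofReal_le_ofReal (hN x hx).le
  have h2 : (∫⁻ x in Iic N, ENNReal.ofReal (g x)) ≤ ∫⁻ x, ENNReal.ofReal (g x) :=
    setLIntegral_le_lintegral _ _
  have h3 : ∫⁻ x, ENNReal.ofReal (g x) < ⊤ := by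
    have := hg.2
    rw [hasFiniteIntegral_iff_norm] at this
    refine lt_of_le_of_lt (lintegral_mono fun x => ?_) this
    exact ENNReal.ofReal_le_ofReal (le_abs_self _)
  have h4 : ∫⁻ x in Iic N, (ENNReal.ofReal (c / 2)) = ⊤ := by
    rw [lintegral_const, Measure.restrict_apply_univ, Real.volume_Iic]
    rw [ENNReal.mul_top]
    simp [ENNReal.ofReal_eq_zero]
    linarith
  rw [h4] at h1
  exact absurd (top_le_iff.mp (h1.trans h2)) h3.ne

lemma line_bound{f : ℝ → ℝ} (hf : Differentiable ℝ f)
    (h2 : Integrable (fun t => f t ^ 2))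
    (h1 : Integrable (fun t => f t * deriv f t)) (x : ℝ) :
    f x ^ 2 ≤ 2 * ∫ t, |f t * deriv f t| := by
  set gd : ℝ → ℝ := fun t => 2 * (f t * deriv f t) with hgd
  have hint : Integrable gd := h1.const_mul 2
  have hD : ∀ t, HasDerivAt (fun s => f s ^ 2) (gd t) t := by
    intro t
    have := ((hf t).hasDerivAt).pow 2
    simpa [hgd, Pi.pow_def] using this.congr_deriv (by ring)
  have hFTC : ∀ a : ℝ, ∫ t in a..x, gd t = f x ^ 2 - f a ^ 2 := fun a =>
    intervalIntegral.integral_eq_sub_of_hasDerivAt (fun t _ => hD t) hint.intervalIntegrable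
  have T1 : Tendsto (fun a => ∫ t in a..x, gd t) atBot (𝓝 (∫ t in Iic x, gd t)) :=
    intervalIntegral_tendsto_integral_Iic x hint.integrableOn tendsto_id
  have T2 : Tendsto (fun a => f a ^ 2) atBot (𝓝 (f x ^ 2 - ∫ t in Iic x, gd t)) := by
    have : (fun a => f a ^ 2) = fun a => f x ^ 2 - ∫ t in a..x, gd t := by
      funext a; rw [hFTC a]; ring
    rw [this]
    exact tendsto_const_nhds.sub T1
  have hc : f x ^ 2 - ∫ t in Iic x, gd t ≤ 0 := limit_nonpos h2 T2
  have hle : ∫ t in Iic x, gd t ≤ ∫ t, |gd t| := by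
    calc ∫ t in Iic x, gd t ≤ ∫ t in Iic x, |gd t| := by
          refine setIntegral_mono_on hint.integrableOn hint.abs.integrableOn
            measurableSet_Iic fun t _ => le_abs_self _
      _ ≤ ∫ t, |gd t| := setIntegral_le_integral hint.abs (ae_of_all _ fun t => abs_nonneg _)
  have habs : ∫ t, |gd t| = 2 * ∫ t, |f t * deriv f t| := by
    rw [← integral_const_mul]
    congr 1; funext t; rw [hgd]; rw [abs_mul]; simp [abs_of_nonneg]
  linarith

noncomputable def LL : (ℝ × ℝ) →L[ℝ] EuclideanSpace ℝ (Fin 2) :=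
  ((EuclideanSpace.equiv (Fin 2) ℝ).symm.toContinuousLinearMap).comp
    (ContinuousLinearMap.pi ![ContinuousLinearMap.fst ℝ ℝ ℝ, ContinuousLinearMap.snd ℝ ℝ ℝ])

lemma LL_apply (p : ℝ × ℝ) (i : Fin 2) : LL p i = ![p.1, p.2] i := by
  fin_cases i <;> rfl

lemma LL_mp : MeasurePreserving LL volume volume := by
  have h1 : MeasurePreserving (MeasurableEquiv.toLp 2 (Fin 2 → ℝ)) volume volume :=
    (EuclideanSpace.volume_preserving_symm_measurableEquiv_toLp (Fin 2)).symm
  have h2 : MeasurePreserving (MeasurableEquiv.finTwoArrow : (Fin 2 → ℝ) ≃ᵐ (ℝ × ℝ)).symm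
      volume volume := (volume_preserving_finTwoArrow ℝ).symm
  have : (LL : ℝ × ℝ → EuclideanSpace ℝ (Fin 2)) =
      (MeasurableEquiv.toLp 2 (Fin 2 → ℝ)) ∘ (MeasurableEquiv.finTwoArrow).symm := by
    funext p
    refine PiLp.ext fun i => ?_
    rw [LL_apply]
    fin_cases i <;> rfl
  rw [this]
  exact h1.comp h2

variable {u : EuclideanSpace ℝ (Fin 2) → ℝ}

lemma fderiv_eq_inner_gradient (hdiff : Differentiable ℝ u) (z : EuclideanSpace ℝ (Fin 2))
    (w : EuclideanSpace ℝ (Fin 2)) : fderiv ℝ u z w = inner ℝ (gradient u z) w := by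
  rw [gradient, InnerProductSpace.toDual_symm_apply]

lemma grad_norm_sq (hdiff : Differentiable ℝ u) (z : EuclideanSpace ℝ (Fin 2)) :
    ‖gradient u z‖ ^ 2 = (fderiv ℝ u z (LL (1, 0))) ^ 2 + (fderiv ℝ u z (LL (0, 1))) ^ 2 := by
  rw [fderiv_eq_inner_gradient hdiff, fderiv_eq_inner_gradient hdiff]
  set g := gradient u z
  have h1 : inner ℝ g (LL (1, 0)) = g 0 := by
    rw [PiLp.inner_apply]
    simp [LL_apply, Fin.sum_univ_two]
  have h2 : inner ℝ g (LL (0, 1)) = g 1 := by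
    rw [PiLp.inner_apply]
    simp [LL_apply, Fin.sum_univ_two]
  rw [h1, h2, EuclideanSpace.norm_eq]
  rw [Real.sq_sqrt (by positivity)]
  simp [Fin.sum_univ_two, sq_abs]

lemma hasDerivAt_line1 (hdiff : Differentiable ℝ u) (y x : ℝ) :
    HasDerivAt (fun t => u (LL (t, y))) (fderiv ℝ u (LL (x, y)) (LL (1, 0))) x := by
  have h0 : HasDerivAt (fun t : ℝ => (t, y)) ((1 : ℝ), (0 : ℝ)) x :=
    (hasDerivAt_id x).prodMk (hasDerivAt_const x y)
  have h1 : HasDerivAt (fun t : ℝ => LL (t, y)) (LL (1, 0)) x :=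
    LL.hasFDerivAt.comp_hasDerivAt x h0
  exact ((hdiff (LL (x, y))).hasFDerivAt).comp_hasDerivAt x h1

lemma hasDerivAt_line2 (hdiff : Differentiable ℝ u) (x y : ℝ) :
    HasDerivAt (fun t => u (LL (x, t))) (fderiv ℝ u (LL (x, y)) (LL (0, 1))) y := by
  have h0 : HasDerivAt (fun t : ℝ => (x, t)) ((0 : ℝ), (1 : ℝ)) y :=
    (hasDerivAt_const y x).prodMk (hasDerivAt_id y)
  have h1 : HasDerivAt (fun t : ℝ => LL (x, t)) (LL (0, 1)) y :=
    LL.hasFDerivAt.comp_hasDerivAt y h0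
  exact ((hdiff (LL (x, y))).hasFDerivAt).comp_hasDerivAt y h1

lemma d1_meas (hdiff : Differentiable ℝ u) :
    Measurable (fun p : ℝ × ℝ => fderiv ℝ u (LL p) (LL (1, 0))) := by
  have : (fun p : ℝ × ℝ => fderiv ℝ u (LL p) (LL (1, 0))) =
      fun p => fderiv ℝ (u ∘ LL) p (1, 0) := by
    funext p
    have h1 : HasFDerivAt (u ∘ LL) ((fderiv ℝ u (LL p)).comp LL) p :=
      ((hdiff (LL p)).hasFDerivAt).comp p LL.hasFDerivAt
    rw [h1.fderiv]
    rfl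
  rw [this]
  exact measurable_fderiv_apply_const ℝ (u ∘ LL) ((1 : ℝ), (0 : ℝ))

lemma d2_meas (hdiff : Differentiable ℝ u) :
    Measurable (fun p : ℝ × ℝ => fderiv ℝ u (LL p) (LL (0, 1))) := by
  have : (fun p : ℝ × ℝ => fderiv ℝ u (LL p) (LL (0, 1))) =
      fun p => fderiv ℝ (u ∘ LL) p (0, 1) := by
    funext p
    have h1 : HasFDerivAt (u ∘ LL) ((fderiv ℝ u (LL p)).comp LL) p :=
      ((hdiff (LL p)).hasFDerivAt).comp p LL.hasFDerivAt
    rw [h1.fderiv]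
    rfl
  rw [this]
  exact measurable_fderiv_apply_const ℝ (u ∘ LL) ((0 : ℝ), (1 : ℝ))

lemma ofReal_sq_rpow (c : ℝ) : (ENNReal.ofReal |c|) ^ (2 : ℝ) = ENNReal.ofReal (c ^ 2) := by
  rw [show (2 : ℝ) = ((2 : ℕ) : ℝ) by norm_num, ENNReal.rpow_natCast,
    ← ENNReal.ofReal_pow (abs_nonneg c), sq_abs]

lemma lintegral_CS {α : Type*} [MeasurableSpace α] {μ : Measure α} {f g : α → ℝ}
    (hf : AEMeasurable f μ) (hg : AEMeasurable g μ) :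
    ∫⁻ a, ENNReal.ofReal |f a * g a| ∂μ ≤
      (∫⁻ a, ENNReal.ofReal (f a ^ 2) ∂μ) ^ ((1 : ℝ) / 2) *
      (∫⁻ a, ENNReal.ofReal (g a ^ 2) ∂μ) ^ ((1 : ℝ) / 2) := by
  have hconj : Real.HolderConjugate 2 2 := ⟨by norm_num, by norm_num, by norm_num⟩
  have hF : AEMeasurable (fun a => ENNReal.ofReal |f a|) μ :=
    (ENNReal.measurable_ofReal.comp measurable_norm).comp_aemeasurable hf
  have hG : AEMeasurable (fun a => ENNReal.ofReal |g a|) μ :=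
    (ENNReal.measurable_ofReal.comp measurable_norm).comp_aemeasurable hg
  have := ENNReal.lintegral_mul_le_Lp_mul_Lq μ hconj hF hG
  simp only [Pi.mul_apply, ofReal_sq_rpow] at this
  refine le_trans (le_of_eq ?_) this
  congr 1
  funext a
  rw [abs_mul, ENNReal.ofReal_mul (abs_nonneg _)]

lemma lint_symm{f : ℝ × ℝ → ℝ≥0∞} (hf : Measurable f) :
    ∫⁻ r, f r = ∫⁻ y, ∫⁻ x, f (x, y) := by
  rw [Measure.volume_eq_prod]; exact lintegral_prod_symm' f hf

lemma lint_prod {f : ℝ × ℝ → ℝ≥0∞} (hf : Measurable f) :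
    ∫⁻ r, f r = ∫⁻ x, ∫⁻ y, f (x, y) := by
  rw [Measure.volume_eq_prod]; exact lintegral_prod f hf.aemeasurable

lemma lineA {v d1 : ℝ × ℝ → ℝ} (hmv : Measurable v) (hm1 : Measurable d1)
    (hder : ∀ y x, HasDerivAt (fun t => v (t, y)) (d1 (x, y)) x)
    (hfin1 : ∫⁻ r, ENNReal.ofReal (v r ^ 2) ≠ ⊤)
    (hfin2 : ∫⁻ r, ENNReal.ofReal (d1 r ^ 2) ≠ ⊤) :
    ∀ᵐ y : ℝ, ∀ x : ℝ, ENNReal.ofReal (v (x, y) ^ 2)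
      ≤ 2 * ∫⁻ s, ENNReal.ofReal |v (s, y) * d1 (s, y)| := by
  have hmv2 : Measurable fun r : ℝ × ℝ => ENNReal.ofReal (v r ^ 2) :=
    ENNReal.measurable_ofReal.comp (hmv.pow_const 2)
  have hm12 : Measurable fun r : ℝ × ℝ => ENNReal.ofReal (d1 r ^ 2) :=
    ENNReal.measurable_ofReal.comp (hm1.pow_const 2)
  have h1 : ∀ᵐ y : ℝ, ∫⁻ x, ENNReal.ofReal (v (x, y) ^ 2) < ⊤ := by
    refine ae_lt_top (hmv2.lintegral_prod_left') ?_
    rw [show (volume : Measure ℝ) = volume from rfl, ← lintegral_prod_symm' _ hmv2,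
      ← Measure.volume_eq_prod]
    exact hfin1
  have h2 : ∀ᵐ y : ℝ, ∫⁻ x, ENNReal.ofReal (d1 (x, y) ^ 2) < ⊤ := by
    refine ae_lt_top (hm12.lintegral_prod_left') ?_
    rw [← lintegral_prod_symm' _ hm12, ← Measure.volume_eq_prod]
    exact hfin2
  filter_upwards [h1, h2] with y hy1 hy2
  intro x
  set f : ℝ → ℝ := fun s => v (s, y) with hf
  have hfd : ∀ s, HasDerivAt f (d1 (s, y)) s := fun s => hder y s
  have hdiff : Differentiable ℝ f := fun s => (hfd s).differentiableAt
  have hfderiv : deriv f = fun s => d1 (s, y) := funext fun s => (hfd s).deriv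
  have hmf : Measurable f := hmv.comp (measurable_prodMk_right)
  have hmd : Measurable fun s => d1 (s, y) := hm1.comp (measurable_prodMk_right)
  have hif2 : Integrable (fun s => f s ^ 2) := by
    refine ⟨((hmf.pow_const 2).aestronglyMeasurable), ?_⟩
    exact (hasFiniteIntegral_iff_ofReal (ae_of_all _ fun s => sq_nonneg _)).2 hy1
  have hiprod : Integrable (fun s => f s * deriv f s) := by
    rw [hfderiv]
    refine ⟨(hmf.mul hmd).aestronglyMeasurable, ?_⟩
    rw [hasFiniteIntegral_iff_norm]
    have hb := lintegral_CS (μ := (volume : Measure ℝ)) hmf.aemeasurable hmd.aemeasurable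
    refine lt_of_le_of_lt (le_trans (le_of_eq ?_) hb) ?_
    · rfl
    · exact ENNReal.mul_lt_top
        (ENNReal.rpow_lt_top_of_nonneg (by norm_num) hy1.ne)
        (ENNReal.rpow_lt_top_of_nonneg (by norm_num) hy2.ne)
  have hb := line_bound hdiff hif2 hiprod x
  rw [hfderiv] at hb
  have heq : ENNReal.ofReal (∫ s, |f s * d1 (s, y)|)
      = ∫⁻ s, ENNReal.ofReal |f s * d1 (s, y)| := by
    refine ofReal_integral_eq_lintegral_ofReal ?_ (ae_of_all _ fun s => abs_nonneg _)
    · have := hiprod.abs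
      rw [hfderiv] at this
      exact this
  calc ENNReal.ofReal (v (x, y) ^ 2) ≤ ENNReal.ofReal (2 * ∫ s, |f s * d1 (s, y)|) :=
        ENNReal.ofReal_le_ofReal hb
    _ = 2 * ∫⁻ s, ENNReal.ofReal |v (s, y) * d1 (s, y)| := by
        rw [ENNReal.ofReal_mul (by norm_num), heq, ENNReal.ofReal_ofNat]

theorem sobolev_L3_bound (u : EuclideanSpace ℝ (Fin 2) → ℝ)
    (hdiff : Differentiable ℝ u)
    (h2 : Integrable (fun x => (u x) ^ 2))
    (hg : Integrable (fun x => ‖gradient u x‖ ^ 2))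
    (h3 : Integrable (fun x => |u x| ^ 3)) :
    (∫ x, |u x| ^ 3) ^ ((1 : ℝ) / 3)
      ≤ (Real.pi / 2) ^ ((1 : ℝ) / 6) *
        Real.sqrt ((∫ x, (u x) ^ 2) + ∫ x, ‖gradient u x‖ ^ 2) := by
  set p : ℝ := ∫ x, (u x) ^ 2 with hp
  set q : ℝ := ∫ x, ‖gradient u x‖ ^ 2 with hq
  set t : ℝ := ∫ x, |u x| ^ 3 with ht
  have hp0 : 0 ≤ p := integral_nonneg fun x => sq_nonneg _
  have hq0 : 0 ≤ q := integral_nonneg fun x => sq_nonneg _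
  have ht0 : 0 ≤ t := integral_nonneg fun x => pow_nonneg (abs_nonneg _) 3
  -- the main analytic bound
  have key : t ≤ 2 * p * Real.sqrt q := by
    classical
    set v : ℝ × ℝ → ℝ := fun r => u (LL r) with hv
    set d1 : ℝ × ℝ → ℝ := fun r => fderiv ℝ u (LL r) (LL (1, 0)) with hd1v
    set d2 : ℝ × ℝ → ℝ := fun r => fderiv ℝ u (LL r) (LL (0, 1)) with hd2v
    have hmu : Measurable u := hdiff.continuous.measurable
    have hmv : Measurable v := (hdiff.continuous.comp LL.continuous).measurable
    have hm1 : Measurable d1 := d1_meas hdiff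
    have hm2 : Measurable d2 := d2_meas hdiff
    have hmv2 : Measurable fun r : ℝ × ℝ => ENNReal.ofReal (v r ^ 2) :=
      ENNReal.measurable_ofReal.comp (hmv.pow_const 2)
    have hm12 : Measurable fun r : ℝ × ℝ => ENNReal.ofReal (d1 r ^ 2) :=
      ENNReal.measurable_ofReal.comp (hm1.pow_const 2)
    have hm22 : Measurable fun r : ℝ × ℝ => ENNReal.ofReal (d2 r ^ 2) :=
      ENNReal.measurable_ofReal.comp (hm2.pow_const 2)
    set P : ℝ≥0∞ := ∫⁻ r, ENNReal.ofReal (v r ^ 2) with hP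
    set Q1 : ℝ≥0∞ := ∫⁻ r, ENNReal.ofReal (d1 r ^ 2) with hQ1
    set Q2 : ℝ≥0∞ := ∫⁻ r, ENNReal.ofReal (d2 r ^ 2) with hQ2
    set T : ℝ≥0∞ := ∫⁻ r, ENNReal.ofReal (|v r| ^ 3) with hT
    have hPeq : P = ENNReal.ofReal p := by
      rw [hP, hp, ofReal_integral_eq_lintegral_ofReal h2 (ae_of_all _ fun z => sq_nonneg _)]
      exact LL_mp.lintegral_comp (ENNReal.measurable_ofReal.comp (hmu.pow_const 2))
    have hgradmeas : Measurable fun z => ‖gradient u z‖ ^ 2 := by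
      have e : (fun z : EuclideanSpace ℝ (Fin 2) => ‖gradient u z‖ ^ 2)
          = fun z => (fderiv ℝ u z (LL (1, 0))) ^ 2 + (fderiv ℝ u z (LL (0, 1))) ^ 2 :=
        funext fun z => grad_norm_sq hdiff z
      rw [e]
      exact ((measurable_fderiv_apply_const ℝ u _).pow_const 2).add
        ((measurable_fderiv_apply_const ℝ u _).pow_const 2)
    have hQeq : Q1 + Q2 = ENNReal.ofReal q := by
      rw [hQ1, hQ2, ← lintegral_add_left hm12]
      rw [lintegral_congr (fun r : ℝ × ℝ => by
        rw [← ENNReal.ofReal_add (sq_nonneg _) (sq_nonneg _), ← grad_norm_sq hdiff (LL r)])]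
      rw [hq, ofReal_integral_eq_lintegral_ofReal hg (ae_of_all _ fun z => sq_nonneg _)]
      exact LL_mp.lintegral_comp (ENNReal.measurable_ofReal.comp hgradmeas)
    have hTeq : T = ENNReal.ofReal t := by
      rw [hT, ht, ofReal_integral_eq_lintegral_ofReal h3
        (ae_of_all _ fun z => pow_nonneg (abs_nonneg _) 3)]
      exact LL_mp.lintegral_comp (ENNReal.measurable_ofReal.comp (hmu.norm.pow_const 3))
    have hPtop : P ≠ ⊤ := by rw [hPeq]; exact ENNReal.ofReal_ne_top
    have hQtop : Q1 + Q2 ≠ ⊤ := by rw [hQeq]; exact ENNReal.ofReal_ne_top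
    have hQ1top : Q1 ≠ ⊤ := ne_top_of_le_ne_top hQtop le_self_add
    have hQ2top : Q2 ≠ ⊤ := ne_top_of_le_ne_top hQtop le_add_self
    -- claims on lines
    have clA : ∀ᵐ y : ℝ, ∀ x : ℝ, ENNReal.ofReal (v (x, y) ^ 2)
        ≤ 2 * ∫⁻ s, ENNReal.ofReal |v (s, y) * d1 (s, y)| :=
      lineA hmv hm1 (fun y x => hasDerivAt_line1 hdiff y x) hPtop hQ1top
    have hswap : MeasurePreserving (Prod.swap : ℝ × ℝ → ℝ × ℝ) volume volume :=
      Measure.measurePreserving_swap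
    have clB : ∀ᵐ x : ℝ, ∀ y : ℝ, ENNReal.ofReal (v (x, y) ^ 2)
        ≤ 2 * ∫⁻ s, ENNReal.ofReal |v (x, s) * d2 (x, s)| := by
      have hfin1 : ∫⁻ r : ℝ × ℝ, ENNReal.ofReal ((v ∘ Prod.swap) r ^ 2) ≠ ⊤ := by
        refine ne_of_eq_of_ne ?_ hPtop
        exact hswap.lintegral_comp hmv2
      have hfin2 : ∫⁻ r : ℝ × ℝ, ENNReal.ofReal ((d2 ∘ Prod.swap) r ^ 2) ≠ ⊤ := by
        refine ne_of_eq_of_ne ?_ hQ2top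
        exact hswap.lintegral_comp hm22
      have := lineA (v := v ∘ Prod.swap) (d1 := d2 ∘ Prod.swap)
        (hmv.comp measurable_swap) (hm2.comp measurable_swap)
        (fun y x => hasDerivAt_line2 hdiff y x) hfin1 hfin2
      exact this
    -- the four quantities
    set M1 : ℝ × ℝ → ℝ≥0∞ := fun r => ENNReal.ofReal |v r * d1 r| with hM1d
    set M2 : ℝ × ℝ → ℝ≥0∞ := fun r => ENNReal.ofReal |v r * d2 r| with hM2d
    have hM1 : Measurable M1 := ENNReal.measurable_ofReal.comp (hmv.mul hm1).norm
    have hM2 : Measurable M2 := ENNReal.measurable_ofReal.comp (hmv.mul hm2).norm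
    set aa : ℝ → ℝ≥0∞ := fun y => 2 * ∫⁻ s, M1 (s, y) with haa
    set bb : ℝ → ℝ≥0∞ := fun x => 2 * ∫⁻ s, M2 (x, s) with hbb
    set AA : ℝ → ℝ≥0∞ := fun y => ∫⁻ x, ENNReal.ofReal (v (x, y) ^ 2) with hAA
    set B : ℝ≥0∞ := ∫⁻ x, bb x with hB
    have hmaa : Measurable aa := (hM1.lintegral_prod_left').const_mul 2
    have hmbb : Measurable bb := (hM2.lintegral_prod_right').const_mul 2
    have hmAA : Measurable AA := hmv2.lintegral_prod_left'
    -- S6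
    have S6 : ∫⁻ y, aa y ≤ 2 * (P ^ ((1:ℝ)/2) * Q1 ^ ((1:ℝ)/2)) := by
      have e1 : ∫⁻ y, aa y = 2 * ∫⁻ r, M1 r := by
        rw [haa, lintegral_const_mul 2 (hM1.lintegral_prod_left'), ← lint_symm hM1]
      rw [e1]
      exact mul_le_mul_right (lintegral_CS hmv.aemeasurable hm1.aemeasurable) 2
    -- S7
    have S7 : B ≤ 2 * (P ^ ((1:ℝ)/2) * Q2 ^ ((1:ℝ)/2)) := by
      have e1 : B = 2 * ∫⁻ r, M2 r := by
        rw [hB, hbb, lintegral_const_mul 2 (hM2.lintegral_prod_right'), ← lint_prod hM2]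
      rw [e1]
      exact mul_le_mul_right (lintegral_CS hmv.aemeasurable hm2.aemeasurable) 2
    -- S4' : AA y ≤ B for every y
    have S4' : ∀ y, AA y ≤ B := by
      intro y
      rw [hAA, hB]
      refine lintegral_mono_ae ?_
      filter_upwards [clB] with x hx
      exact hx y
    -- S5
    have S5 : ∫⁻ y, AA y * AA y ≤ B * P := by
      have e0 : ∫⁻ y, AA y = P := by rw [hP, lint_symm hmv2]
      calc ∫⁻ y, AA y * AA y ≤ ∫⁻ y, B * AA y :=
            lintegral_mono fun y => mul_le_mul_left (S4' y) _
        _ = B * ∫⁻ y, AA y := lintegral_const_mul B hmAA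
        _ = B * P := by rw [e0]
    -- pointwise cube identity
    have cube_id : ∀ c : ℝ, ENNReal.ofReal (|c| ^ 3)
        = (ENNReal.ofReal (c ^ 2)) ^ ((1:ℝ)/2) * ENNReal.ofReal (c ^ 2) := by
      intro c
      rw [ENNReal.ofReal_rpow_of_nonneg (sq_nonneg c) (by norm_num), ← Real.sqrt_eq_rpow,
        Real.sqrt_sq_eq_abs, ← ENNReal.ofReal_mul (abs_nonneg c)]
      congr 1
      rw [show |c| * c ^ 2 = |c| * |c| ^ 2 by rw [sq_abs]]
      ring
    -- S3 : T ≤ ∫⁻ y, (aa y)^(1/2) * AA y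
    have hM3 : Measurable fun r : ℝ × ℝ => ENNReal.ofReal (|v r| ^ 3) :=
      ENNReal.measurable_ofReal.comp (hmv.norm.pow_const 3)
    have S3 : T ≤ ∫⁻ y, (aa y) ^ ((1:ℝ)/2) * AA y := by
      rw [hT, lint_symm hM3]
      refine lintegral_mono_ae ?_
      filter_upwards [clA] with y hy
      have pw : ∀ x : ℝ, ENNReal.ofReal (|v (x, y)| ^ 3)
          ≤ (aa y) ^ ((1:ℝ)/2) * ENNReal.ofReal (v (x, y) ^ 2) := by
        intro x
        rw [cube_id (v (x, y))]
        exact mul_le_mul_left (ENNReal.rpow_le_rpow (hy x) (by norm_num)) _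
      calc ∫⁻ x, ENNReal.ofReal (|v (x, y)| ^ 3) ≤
            ∫⁻ x, (aa y) ^ ((1:ℝ)/2) * ENNReal.ofReal (v (x, y) ^ 2) := lintegral_mono pw
        _ = (aa y) ^ ((1:ℝ)/2) * AA y := by
            have hmx : Measurable fun x : ℝ => ENNReal.ofReal (v (x, y) ^ 2) :=
              hmv2.comp measurable_prodMk_right
            rw [hAA, lintegral_const_mul _ hmx]
    -- S4 : Hoelder in y
    have S4 : ∫⁻ y, (aa y) ^ ((1:ℝ)/2) * AA y
        ≤ (∫⁻ y, aa y) ^ ((1:ℝ)/2) * (∫⁻ y, AA y * AA y) ^ ((1:ℝ)/2) := by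
      have hconj : Real.HolderConjugate 2 2 := ⟨by norm_num, by norm_num, by norm_num⟩
      have := ENNReal.lintegral_mul_le_Lp_mul_Lq (volume : Measure ℝ) hconj
        ((hmaa.pow_const ((1:ℝ)/2)).aemeasurable) hmAA.aemeasurable
      simp only [Pi.mul_apply] at this
      refine le_trans this (le_of_eq ?_)
      congr 1
      · congr 1
        refine lintegral_congr fun y => ?_
        rw [← ENNReal.rpow_mul]
        norm_num
      · congr 1
        refine lintegral_congr fun y => ?_
        rw [ENNReal.rpow_two, sq]
    -- put everything together in ℝ≥0∞
    set Q : ℝ≥0∞ := ENNReal.ofReal q with hQ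
    have hQ1le : Q1 ≤ Q := by rw [← hQeq]; exact le_self_add
    have hQ2le : Q2 ≤ Q := by rw [← hQeq]; exact le_add_self
    have main : T ≤ 2 * P * Q ^ ((1:ℝ)/2) := by
      have step1 : T ≤ (∫⁻ y, aa y) ^ ((1:ℝ)/2) * (∫⁻ y, AA y * AA y) ^ ((1:ℝ)/2) :=
        le_trans S3 S4
      have hX1 : 2 * (P ^ ((1:ℝ)/2) * Q1 ^ ((1:ℝ)/2)) ≤ 2 * (P ^ ((1:ℝ)/2) * Q ^ ((1:ℝ)/2)) :=
        mul_le_mul_right (mul_le_mul_right (ENNReal.rpow_le_rpow hQ1le (by norm_num)) _) 2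
      have hX2 : 2 * (P ^ ((1:ℝ)/2) * Q2 ^ ((1:ℝ)/2)) ≤ 2 * (P ^ ((1:ℝ)/2) * Q ^ ((1:ℝ)/2)) :=
        mul_le_mul_right (mul_le_mul_right (ENNReal.rpow_le_rpow hQ2le (by norm_num)) _) 2
      set X : ℝ≥0∞ := 2 * (P ^ ((1:ℝ)/2) * Q ^ ((1:ℝ)/2)) with hX
      have step2 : T ≤ X ^ ((1:ℝ)/2) * (X * P) ^ ((1:ℝ)/2) := by
        refine le_trans step1 (mul_le_mul' ?_ ?_)
        · exact ENNReal.rpow_le_rpow (le_trans S6 hX1) (by norm_num)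
        · refine ENNReal.rpow_le_rpow ?_ (by norm_num)
          exact le_trans S5 (mul_le_mul_left (le_trans S7 hX2) P)
      have ehalf : ∀ Z : ℝ≥0∞, Z ^ ((1:ℝ)/2) * Z ^ ((1:ℝ)/2) = Z := by
        intro Z
        rw [← ENNReal.rpow_add_of_nonneg ((1:ℝ)/2) ((1:ℝ)/2) (by norm_num) (by norm_num)]
        norm_num
      have e : X ^ ((1:ℝ)/2) * (X * P) ^ ((1:ℝ)/2) = X * P ^ ((1:ℝ)/2) := by
        rw [ENNReal.mul_rpow_of_nonneg X P (by norm_num), ← mul_assoc, ehalf X]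
      rw [e] at step2
      refine le_trans step2 (le_of_eq ?_)
      rw [hX]
      calc 2 * (P ^ ((1:ℝ)/2) * Q ^ ((1:ℝ)/2)) * P ^ ((1:ℝ)/2)
          = 2 * (P ^ ((1:ℝ)/2) * P ^ ((1:ℝ)/2)) * Q ^ ((1:ℝ)/2) := by ring
        _ = 2 * P * Q ^ ((1:ℝ)/2) := by rw [ehalf P]
    have final : ENNReal.ofReal t ≤ ENNReal.ofReal (2 * p * Real.sqrt q) := by
      rw [← hTeq]
      refine le_trans main (le_of_eq ?_)
      rw [hPeq, hQ, ENNReal.ofReal_rpow_of_nonneg hq0 (by norm_num), ← Real.sqrt_eq_rpow,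
        ENNReal.ofReal_mul (by positivity), ENNReal.ofReal_mul (by norm_num),
        ENNReal.ofReal_ofNat]
    exact (ENNReal.ofReal_le_ofReal_iff (by positivity)).1 final
  -- from key to the goal
  set S : ℝ := p + q with hS
  have hS0 : 0 ≤ S := by positivity
  set R : ℝ := (Real.pi / 2) ^ ((1 : ℝ) / 6) * Real.sqrt S with hR
  have hR0 : 0 ≤ R := by positivity
  have hcube : t ≤ R ^ 3 := by
    have hRc : R ^ 3 = (Real.pi / 2) ^ ((1 : ℝ) / 2) * (S * Real.sqrt S) := by
      rw [hR, mul_pow, ← Real.rpow_natCast ((Real.pi / 2) ^ ((1:ℝ)/6)) 3,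
        ← Real.rpow_mul (by positivity)]
      rw [show ((1:ℝ)/6 * (3:ℕ) : ℝ) = 1/2 by norm_num]
      rw [pow_succ, Real.sq_sqrt hS0]
    have hπ : (36 : ℝ) / 25 ≤ Real.pi / 2 := by
      have := Real.pi_gt_three
      linarith
    have h36 : 4 * p ^ 2 * q ≤ Real.pi / 2 * S ^ 3 := by
      have : 4 * p ^ 2 * q ≤ (36 / 25) * S ^ 3 := by
        rw [hS]; nlinarith [mul_nonneg (mul_nonneg hp0 hp0) hq0,
          mul_nonneg (mul_nonneg hq0 hq0) hp0, pow_nonneg hp0 3, pow_nonneg hq0 3]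
      have h2' : (36 / 25 : ℝ) * S ^ 3 ≤ Real.pi / 2 * S ^ 3 :=
        mul_le_mul_of_nonneg_right hπ (pow_nonneg hS0 3)
      linarith
    have h1 : 2 * p * Real.sqrt q = Real.sqrt (4 * p ^ 2 * q) := by
      rw [show (4 : ℝ) * p ^ 2 * q = (2 * p) ^ 2 * q by ring, Real.sqrt_mul (sq_nonneg _),
        Real.sqrt_sq (by positivity)]
    have h2' : (Real.pi / 2) ^ ((1 : ℝ) / 2) * (S * Real.sqrt S)
        = Real.sqrt (Real.pi / 2 * S ^ 3) := by
      rw [Real.sqrt_mul (by positivity), ← Real.sqrt_eq_rpow,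
        show S ^ 3 = S ^ 2 * S by ring, Real.sqrt_mul (sq_nonneg _), Real.sqrt_sq hS0]
    have key2 : 2 * p * Real.sqrt q ≤ (Real.pi / 2) ^ ((1 : ℝ) / 2) * (S * Real.sqrt S) := by
      rw [h1, h2']
      exact Real.sqrt_le_sqrt h36
    rw [hRc]
    linarith
  calc t ^ ((1:ℝ)/3) ≤ (R ^ 3) ^ ((1:ℝ)/3) :=
        Real.rpow_le_rpow ht0 hcube (by norm_num)
    _ = R := by
        rw [← Real.rpow_natCast R 3, ← Real.rpow_mul hR0]
        norm_num
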